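/- Let G be a countable group acting by homeomorphisms on a nonempty compact metrizable space X, and let Inv denote the set of G-invariant Borel probability measures on X. A measure μ ∈ Inv is an extreme point of Inv if and only if μ is ergodic, i.e. every Borel set s ⊆ X with g⁻¹ • s = s for all g ∈ G satisfies μ(s) = 0 or μ(s) = 1. -/

import Mathlib

open MeasureTheory
open scoped ENNReal

/-- For a countable group `G` acting by homeomorphisms on a nonempty compact metrizable
space `X`, a `G`-invariant Borel probability measure `μ` is an extreme point of the
convex set of invariant probability measures (i.e. it is not a proper convex combination
of two distinct invariant probability measures) if and only if it is ergodic: every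
Borel set `s` with `(g • ·) ⁻¹' s = s` for all `g` has measure `0` or `1`. -/
theorem extreme_iff_ergodic {G X : Type*} [Group G] [Countable G]
    [TopologicalSpace X] [CompactSpace X] [TopologicalSpace.MetrizableSpace X] [Nonempty X]
    [MeasurableSpace X] [BorelSpace X] [MulAction G X]
    (hcont : ∀ g : G, Continuous fun x : X => g • x)
    (Inv : Set (Measure X))
    (hInv : Inv = {μ : Measure X | IsProbabilityMeasure μ ∧
      ∀ g : G, Measure.map (fun x : X => g • x) μ = μ})
    (μ : Measure X) (hμ : μ ∈ Inv) :
    (∀ ν₁ ∈ Inv, ∀ ν₂ ∈ Inv, ∀ t : ℝ≥0∞, 0 < t → t < 1 →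
        μ = t • ν₁ + (1 - t) • ν₂ → ν₁ = ν₂) ↔
      (∀ s : Set X, MeasurableSet s → (∀ g : G, (fun x : X => g • x) ⁻¹' s = s) →
        μ s = 0 ∨ μ s = 1) := by
  subst hInv
  obtain ⟨hμp, hμinv⟩ := hμ
  haveI := hμp
  have hmeas : ∀ g : G, Measurable fun x : X => g • x := fun g => (hcont g).measurable
  constructor
  · -- extreme → ergodic
    intro hext s hs hsinv
    by_contra hcon
    push_neg at hcon
    obtain ⟨h0, h1⟩ := hcon
    have hsc : MeasurableSet sᶜ := hs.compl
    have hμs_ne_top : μ s ≠ ∞ := measure_ne_top μ s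
    have hμsc : μ sᶜ = 1 - μ s := by
      rw [measure_compl hs hμs_ne_top, measure_univ]
    have h1' : μ s < 1 := lt_of_le_of_ne prob_le_one h1
    have hc0 : μ sᶜ ≠ 0 := by
      rw [hμsc]
      simpa [tsub_eq_zero_iff_le] using not_le.2 h1'
    have hμsc_ne_top : μ sᶜ ≠ ∞ := measure_ne_top μ sᶜ
    set ν₁ := (μ s)⁻¹ • μ.restrict s with hν₁
    set ν₂ := (μ sᶜ)⁻¹ • μ.restrict sᶜ with hν₂
    have hrinv : ∀ (u : Set X), MeasurableSet u →
        (∀ g : G, (fun x : X => g • x) ⁻¹' u = u) →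
        ∀ g : G, Measure.map (fun x : X => g • x) (μ.restrict u) = μ.restrict u := by
      intro u hu huinv g
      have h := Measure.restrict_map (hmeas g) hu (μ := μ)
      rw [hμinv g, huinv g] at h
      exact h.symm
    have hscinv : ∀ g : G, (fun x : X => g • x) ⁻¹' sᶜ = sᶜ := by
      intro g
      rw [Set.preimage_compl, hsinv g]
    have hν₁p : IsProbabilityMeasure ν₁ := by
      constructor
      rw [hν₁, Measure.smul_apply, Measure.restrict_apply_univ, smul_eq_mul,
        ENNReal.inv_mul_cancel h0 hμs_ne_top]
    have hν₂p : IsProbabilityMeasure ν₂ := by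
      constructor
      rw [hν₂, Measure.smul_apply, Measure.restrict_apply_univ, smul_eq_mul,
        ENNReal.inv_mul_cancel hc0 hμsc_ne_top]
    have hν₁mem : ν₁ ∈ {μ : Measure X | IsProbabilityMeasure μ ∧
        ∀ g : G, Measure.map (fun x : X => g • x) μ = μ} := by
      refine ⟨hν₁p, fun g => ?_⟩
      rw [hν₁, Measure.map_smul, hrinv s hs hsinv g]
    have hν₂mem : ν₂ ∈ {μ : Measure X | IsProbabilityMeasure μ ∧
        ∀ g : G, Measure.map (fun x : X => g • x) μ = μ} := by
      refine ⟨hν₂p, fun g => ?_⟩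
      rw [hν₂, Measure.map_smul, hrinv sᶜ hsc hscinv g]
    have hconv : μ = (μ s) • ν₁ + (1 - μ s) • ν₂ := by
      rw [hν₁, hν₂, ← hμsc, smul_smul, smul_smul,
        ENNReal.mul_inv_cancel h0 hμs_ne_top, ENNReal.mul_inv_cancel hc0 hμsc_ne_top,
        one_smul, one_smul, Measure.restrict_add_restrict_compl hs]
    have heq := hext ν₁ hν₁mem ν₂ hν₂mem (μ s) (pos_iff_ne_zero.mpr h0) h1' hconv
    have hv1s : ν₁ s = 1 := by
      rw [hν₁, Measure.smul_apply, Measure.restrict_apply hs, Set.inter_self, smul_eq_mul,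
        ENNReal.inv_mul_cancel h0 hμs_ne_top]
    have hv2s : ν₂ s = 0 := by
      rw [hν₂, Measure.smul_apply, Measure.restrict_apply hs, Set.inter_compl_self,
        measure_empty, smul_eq_mul, mul_zero]
    rw [heq, hv2s] at hv1s
    exact zero_ne_one hv1s
  · -- ergodic → extreme
    intro herg ν₁ hν₁ ν₂ hν₂ t ht0 ht1 hconv
    obtain ⟨hν₁p, hν₁inv⟩ := hν₁
    obtain ⟨hν₂p, hν₂inv⟩ := hν₂
    have ht0' : t ≠ 0 := ht0.ne'
    have ht1' : (1 : ℝ≥0∞) - t ≠ 0 := by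
      simpa [tsub_eq_zero_iff_le] using not_le.2 ht1
    have happ : ∀ A : Set X, μ A = t * ν₁ A + (1 - t) * ν₂ A := by
      intro A
      rw [hconv]
      simp [Measure.add_apply, Measure.smul_apply, smul_eq_mul]
    have key : ∀ ν : Measure X, IsProbabilityMeasure ν →
        (∀ g : G, Measure.map (fun x : X => g • x) ν = ν) → ν ≪ μ → ν = μ := by
      intro ν hνp hνinv hac
      haveI := hνp
      set f := ν.rnDeriv μ with hfdef
      have hfm : Measurable f := Measure.measurable_rnDeriv ν μ
      have hνd : μ.withDensity f = ν := Measure.withDensity_rnDeriv_eq ν μ hac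
      have hint : ∫⁻ x, f x ∂μ = 1 := by
        have h := congrArg (fun m : Measure X => m Set.univ) hνd
        simpa [withDensity_apply f MeasurableSet.univ, setLIntegral_univ] using h
      -- a.e. invariance of the density
      have hfg : ∀ g : G, (fun x => f (g • x)) =ᵐ[μ] f := by
        intro g
        have heq : μ.withDensity (fun x => f (g • x)) = μ.withDensity f := by
          ext B hB
          rw [withDensity_apply _ hB, withDensity_apply _ hB]
          set A := (fun x : X => g⁻¹ • x) ⁻¹' B with hA
          have hAm : MeasurableSet A := hmeas g⁻¹ hB
          have hBA : (fun x : X => g • x) ⁻¹' A = B := by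
            ext x
            simp [hA, Set.mem_preimage, smul_smul]
          have h1 : ∫⁻ x in B, f (g • x) ∂μ
              = ∫⁻ y in A, f y ∂(Measure.map (fun x : X => g • x) μ) := by
            rw [setLIntegral_map hAm hfm (hmeas g), hBA]
          rw [h1, hμinv g]
          have h2 : ∫⁻ y in A, f y ∂μ = ν A := by rw [← withDensity_apply _ hAm, hνd]
          have h3 : ∫⁻ y in B, f y ∂μ = ν B := by rw [← withDensity_apply _ hB, hνd]
          rw [h2, h3, ← hBA, ← Measure.map_apply (hmeas g) hAm, hνinv g]
        have hfin : ∫⁻ x, f (g • x) ∂μ ≠ ∞ := by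
          have h := congrArg (fun m : Measure X => m Set.univ) heq
          simp only [withDensity_apply _ MeasurableSet.univ, setLIntegral_univ] at h
          rw [h, hint]
          exact ENNReal.one_ne_top
        exact (withDensity_eq_iff ((hfm.comp (hmeas g)).aemeasurable)
          hfm.aemeasurable hfin).mp heq
      set s := {x : X | f x < 1} with hsdef
      have hsm : MeasurableSet s := measurableSet_lt hfm measurable_const
      set S := ⋂ g : G, (fun x : X => g • x) ⁻¹' s with hSdef
      have hSm : MeasurableSet S := MeasurableSet.iInter fun g => hmeas g hsm
      have hSinv : ∀ g : G, (fun x : X => g • x) ⁻¹' S = S := by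
        intro h
        ext x
        simp only [hSdef, Set.mem_iInter, Set.mem_preimage]
        constructor
        · intro hx k
          have := hx (k * h⁻¹)
          simpa [smul_smul] using this
        · intro hx k
          have := hx (k * h)
          simpa [smul_smul] using this
      have hnull : ∀ g : G, μ (s \ (fun x : X => g • x) ⁻¹' s) = 0 := by
        intro g
        have hae : μ {x | ¬ f (g • x) = f x} = 0 := ae_iff.mp (hfg g)
        refine measure_mono_null (fun x hx => ?_) hae
        obtain ⟨hx1, hx2⟩ := hx
        intro hfeq
        exact hx2 (by simpa [hsdef, Set.mem_preimage, hfeq] using hx1)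
      have hSsub : S ⊆ s := fun x hx => by
        simpa using Set.mem_iInter.mp hx 1
      have hsS : μ s = μ S := by
        refine le_antisymm ?_ (measure_mono hSsub)
        have hd : μ (s \ S) = 0 := by
          refine measure_mono_null (fun x hx => ?_) (measure_iUnion_null hnull)
          obtain ⟨hx1, hx2⟩ := hx
          rw [hSdef, Set.mem_iInter] at hx2
          push_neg at hx2
          obtain ⟨g, hg⟩ := hx2
          exact Set.mem_iUnion.mpr ⟨g, hx1, hg⟩
        calc μ s = μ (S ∪ (s \ S)) := by rw [Set.union_diff_cancel hSsub]
          _ ≤ μ S + μ (s \ S) := measure_union_le _ _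
          _ = μ S := by rw [hd, add_zero]
      have hone : (fun _ : X => (1 : ℝ≥0∞)) =ᵐ[μ] f := by
        rcases herg S hSm hSinv with hZ | hO
        · -- μ s = 0, so f ≥ 1 a.e.
          have hge : (fun _ : X => (1 : ℝ≥0∞)) ≤ᵐ[μ] f := by
            have : μ {x | ¬ (1 : ℝ≥0∞) ≤ f x} = 0 := by
              have : {x | ¬ (1 : ℝ≥0∞) ≤ f x} = s := by
                ext x; simp [hsdef, not_le]
              rw [this, hsS, hZ]
            exact ae_iff.mpr this
          refine ae_eq_of_ae_le_of_lintegral_le hge ?_ hfm.aemeasurable ?_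
          · simp
          · rw [hint, lintegral_one, measure_univ]
        · -- μ s = 1, contradiction
          exfalso
          have hle : f ≤ᵐ[μ] (fun _ : X => (1 : ℝ≥0∞)) := by
            have hcm : μ sᶜ = 0 := by
              rw [measure_compl hsm (measure_ne_top μ s), measure_univ, hsS, hO, tsub_self]
            refine ae_iff.mpr (measure_mono_null (fun x hx => ?_) hcm)
            simp only [Set.mem_setOf_eq, not_le] at hx
            intro hxs
            exact absurd hxs (by simpa [hsdef] using not_lt.mpr hx.le)
          have hfeq : f =ᵐ[μ] (fun _ : X => (1 : ℝ≥0∞)) := by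
            refine ae_eq_of_ae_le_of_lintegral_le hle (by rw [hint]; exact ENNReal.one_ne_top)
              aemeasurable_const ?_
            rw [hint, lintegral_one, measure_univ]
          -- then μ s = 0, contradicting μ s = 1
          have : μ s = 0 := by
            refine measure_mono_null (fun x hx => ?_) (ae_iff.mp hfeq)
            simp only [hsdef, Set.mem_setOf_eq] at hx
            simp only [Set.mem_setOf_eq]
            exact fun h => absurd h.symm.le (not_le.mpr (by simpa using hx))
          rw [hsS, hO] at this
          exact one_ne_zero this
      calc ν = μ.withDensity f := hνd.symm
        _ = μ.withDensity (fun _ => 1) := (withDensity_congr_ae hone).symm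
        _ = μ := withDensity_one
    have hac₁ : ν₁ ≪ μ := by
      refine Measure.AbsolutelyContinuous.mk fun A hA hA0 => ?_
      have h := happ A
      rw [hA0] at h
      have ht : t * ν₁ A = 0 := by
        have := le_of_eq h.symm
        have h1 : t * ν₁ A ≤ 0 := le_trans (le_add_right le_rfl) this
        exact le_antisymm h1 zero_le
      exact (mul_eq_zero.mp ht).resolve_left ht0'
    have hac₂ : ν₂ ≪ μ := by
      refine Measure.AbsolutelyContinuous.mk fun A hA hA0 => ?_
      have h := happ A
      rw [hA0] at h
      have ht : (1 - t) * ν₂ A = 0 := by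
        have := le_of_eq h.symm
        have h1 : (1 - t) * ν₂ A ≤ 0 := le_trans (le_add_left le_rfl) this
        exact le_antisymm h1 zero_le
      exact (mul_eq_zero.mp ht).resolve_left ht1'
    rw [key ν₁ hν₁p hν₁inv hac₁, key ν₂ hν₂p hν₂inv hac₂]
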